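/- Let s, p, t be real numbers with e^{−p} − t·s·e^{p} > 0. Set φ = t·e^{p}/(e^{−p} − t·s·e^{p}), s′ = s·e^{p}·(e^{−p} − s·e^{p}·t) and p′ = −log(e^{−p} − s·e^{p}·t). Then u(φ)·(ū(s)·a(p))·u(−t) = ū(s′)·a(p′) as an identity of 2×2 real matrices. -/

import Mathlib

/-- Matching function identity for the horocycle flow (Lemma 3.9, 2×2 matrix calculation):
`u(φ) · (ū(s) · a(p)) · u(−t) = ū(s′) · a(p′)` where
`u(t) = [[1, t], [0, 1]]`, `ū(s) = [[1, 0], [s, 1]]`, `a(p) = [[eᵖ, 0], [0, e⁻ᵖ]]`. -/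
theorem matching_matrix_identity (s p t : ℝ)
    (hpos : 0 < Real.exp (-p) - t * s * Real.exp p) :
    let φ : ℝ := t * Real.exp p / (Real.exp (-p) - t * s * Real.exp p)
    let s' : ℝ := s * Real.exp p * (Real.exp (-p) - s * Real.exp p * t)
    let p' : ℝ := - Real.log (Real.exp (-p) - s * Real.exp p * t)
    (!![1, φ; 0, 1] : Matrix (Fin 2) (Fin 2) ℝ) *
        (!![1, 0; s, 1] * !![Real.exp p, 0; 0, Real.exp (-p)]) *
        !![1, -t; 0, 1]
      = !![1, 0; s', 1] * !![Real.exp p', 0; 0, Real.exp (-p')] := by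
  intro φ s' p'
  have hD : Real.exp (-p) - t * s * Real.exp p ≠ 0 := ne_of_gt hpos
  have hD' : Real.exp (-p) - s * Real.exp p * t = Real.exp (-p) - t * s * Real.exp p := by ring
  have hexp1 : Real.exp p' = (Real.exp (-p) - t * s * Real.exp p)⁻¹ := by
    rw [show p' = - Real.log (Real.exp (-p) - s * Real.exp p * t) from rfl, hD',
      Real.exp_neg, Real.exp_log hpos]
  have hexp2 : Real.exp (-p') = Real.exp (-p) - t * s * Real.exp p := by
    rw [show -p' = Real.log (Real.exp (-p) - s * Real.exp p * t) by simp [p'], hD',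
      Real.exp_log hpos]
  have hee : Real.exp p * Real.exp (-p) = 1 := by
    rw [← Real.exp_add]; simp
  have hD2 : -(Real.exp p * t * s) + Real.exp (-p) ≠ 0 := by
    intro h; apply hD; linarith
  have hD3 : -(s * Real.exp p * t) + Real.exp (-p) ≠ 0 := by
    intro h; apply hD; linarith
  have hD4 : Real.exp (-p) - Real.exp p * t * s ≠ 0 := by
    intro h; apply hD; linarith
  have hD5 : Real.exp (-p) - s * Real.exp p * t ≠ 0 := by
    intro h; apply hD; linarith
  ext i j
  fin_cases i <;> fin_cases j
  · simp [Matrix.mul_apply, Fin.sum_univ_succ, hexp1, hexp2, s', φ]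
    field_simp
    linear_combination hee
  · simp [Matrix.mul_apply, Fin.sum_univ_succ, hexp1, hexp2, s', φ]
    field_simp
    ring
  · simp [Matrix.mul_apply, Fin.sum_univ_succ, hexp1, hexp2, s', φ]
    field_simp
  · simp [Matrix.mul_apply, Fin.sum_univ_succ, hexp1, hexp2, s', φ]
    ring
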